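/- Rank formula for K_n: let f be a parking configuration on K_n with sorted first n-1 entries, w = phi(f) the associated word in D_n with height sequence eta_1, ..., eta_{n-1} (eta_i = (number of a's) - (number of b's) in the prefix of w preceding the i-th occurrence of a). Writing f_n + 1 = q(n-1) + r with 0 <= r < n-1, the rank satisfies 1 + rho(f) = sum_{i=1}^{n-1} max(0, q - eta_i + [i <= r]). -/

import Mathlib

/-- Laplacian configuration `Δ^(i)` of the multigraph given by edge-multiplicity matrix `e`. -/
def lapG {n : ℕ} (e : Fin n → Fin n → ℕ) (i : Fin n) : Fin n → ℤ :=
  fun j => if j = i then (∑ k, (e i k : ℤ)) else -(e i j : ℤ)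

/-- Toppling equivalence: `f - g` lies in the lattice generated by the `Δ^(i)`. -/
def topG {n : ℕ} (e : Fin n → Fin n → ℕ) (f g : Fin n → ℤ) : Prop :=
  ∃ a : Fin n → ℤ, f - g = ∑ i, a i • lapG e i

/-- `L_G`-effectiveness: toppling equivalent to a nonnegative configuration. -/
def effG {n : ℕ} (e : Fin n → Fin n → ℕ) (f : Fin n → ℤ) : Prop :=
  ∃ g : Fin n → ℤ, topG e f g ∧ ∀ i, 0 ≤ g i

/-- The Baker–Norine rank:
`rankG e f + 1 = min {deg λ | λ ≥ 0, f - λ not L_G-effective}`. -/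
noncomputable def rankG {n : ℕ} (e : Fin n → Fin n → ℕ) (f : Fin n → ℤ) : ℤ :=
  sInf {d : ℤ | ∃ lam : Fin n → ℤ,
    (∀ i, 0 ≤ lam i) ∧ (∑ i, lam i) = d ∧ ¬ effG e (f - lam)} - 1

/-- Edge multiplicities of the complete graph `K n`. -/
def eK (n : ℕ) : Fin n → Fin n → ℕ := fun i j => if i = j then 0 else 1

/-- Parking configuration on `K n` (with sink `n`, the last vertex). -/
def parkingK {n : ℕ} (f : Fin n → ℤ) : Prop :=
  (∀ i : Fin n, (i : ℕ) < n - 1 → 0 ≤ f i) ∧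
    ∀ Y : Finset (Fin n), Y.Nonempty → (∀ i ∈ Y, (i : ℕ) < n - 1) →
      ∃ k ∈ Y, f k < (n : ℤ) - (Y.card : ℤ)

lemma ediv_lb {n : ℤ} (hn : 0 < n) (x : ℤ) : n * (x / n) ≤ x := by
  have := Int.ediv_mul_le x hn.ne'
  linarith [this]

lemma ediv_ub {n : ℤ} (hn : 0 < n) (x : ℤ) : x < n * (x / n) + n := by
  have := Int.lt_ediv_add_one_mul_self x hn
  linarith [this]

lemma ediv_eq_of {n x k : ℤ} (hn : 0 < n) (h1 : k * n ≤ x) (h2 : x < k * n + n) : x / n = k := by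
  have l1 := ediv_lb hn x
  have l2 := ediv_ub hn x
  have h3 : k < x / n + 1 := by
    by_contra h
    push_neg at h
    have : n * (x / n + 1) ≤ n * k := by
      apply mul_le_mul_of_nonneg_left _ hn.le; omega
    nlinarith
  have h4 : x / n < k + 1 := by
    by_contra h
    push_neg at h
    have : n * (k + 1) ≤ n * (x / n) := by
      apply mul_le_mul_of_nonneg_left _ hn.le; omega
    nlinarith
  omega

lemma win_step (n m : ℕ) (h : n = m + 1) (x : ℤ) :
    ∑ c ∈ Finset.range n, (x + 1 - (c:ℤ)) / n = (∑ c ∈ Finset.range n, (x - (c:ℤ)) / n) + 1 := by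
  subst h
  push_cast
  rw [Finset.sum_range_succ' (fun c => (x + 1 - (c:ℤ)) / ((m:ℤ)+1))]
  rw [Finset.sum_range_succ (fun c => (x - (c:ℤ)) / ((m:ℤ)+1))]
  push_cast
  have h1 : ∀ c : ℕ, (x + 1 - ((c:ℤ) + 1)) / ((m:ℤ)+1) = (x - c) / ((m:ℤ)+1) := by
    intro c; ring_nf
  have h2 : (x + 1 - (0:ℤ)) / ((m:ℤ)+1) = (x - (m:ℤ)) / ((m:ℤ)+1) + 1 := by
    have : x + 1 - (0:ℤ) = (x - m) + 1 * ((m:ℤ)+1) := by ring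
    rw [this, Int.add_mul_ediv_right _ _ (by positivity)]
  rw [Finset.sum_congr rfl (fun c _ => h1 c), h2]
  push_cast
  ring

lemma win (n : ℕ) (hn : 1 ≤ n) (x : ℤ) :
    ∑ c ∈ Finset.range n, (x - (c:ℤ)) / n = x - n + 1 := by
  obtain ⟨m, rfl⟩ : ∃ m, n = m + 1 := ⟨n - 1, by omega⟩
  induction x using Int.induction_on with
  | zero =>
    have h1 : ∀ c ∈ Finset.range (m+1), ((0:ℤ) - (c:ℤ)) / ((m:ℤ)+1) = -1 + (if 0 = c then 1 else 0) := by
      intro c hc; simp only [Finset.mem_range] at hc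
      rcases Nat.eq_zero_or_pos c with h|h
      · subst h; simp
      · rw [if_neg (by omega)]
        have : ((0:ℤ) - (c:ℤ)) / ((m:ℤ)+1) = -1 :=
          ediv_eq_of (by positivity) (by push_cast; omega) (by push_cast; omega)
        omega
    push_cast
    rw [Finset.sum_congr rfl h1, Finset.sum_add_distrib, Finset.sum_ite_eq, Finset.sum_const]
    simp
  | succ k ih =>
    have := win_step (m+1) m rfl (k:ℤ)
    push_cast at this ih ⊢
    rw [show ((k:ℤ) + 1) = (k:ℤ) + 1 by ring] at *
    omega
  | pred k ih =>
    have := win_step (m+1) m rfl (-(k:ℤ) - 1)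
    push_cast at this ih ⊢
    have e : (-(k:ℤ) - 1 + 1) = -(k:ℤ) := by ring
    rw [e] at this
    omega
lemma lt_ediv_imp {n x k : ℤ} (hn : 0 < n) (h : k < x / n) : n * (k + 1) ≤ x :=
  calc n * (k + 1) ≤ n * (x / n) := by apply mul_le_mul_of_nonneg_left _ hn.le; omega
  _ ≤ x := ediv_lb hn x

lemma ediv_lt_imp {n x k : ℤ} (hn : 0 < n) (h : x / n < k) : x < n * k :=
  calc x < n * (x / n) + n := ediv_ub hn x
  _ = n * (x / n + 1) := by ring
  _ ≤ n * k := by apply mul_le_mul_of_nonneg_left _ hn.le; omega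

lemma conv_sum {n m : ℕ} (hm : n = m + 1) (Tn : ℕ → ℤ) (T : Fin n → ℤ)
    (hT : ∀ i : Fin n, T i = Tn i) :
    ∑ i, T i = (∑ i ∈ Finset.range m, Tn i) + Tn m := by
  rw [Finset.sum_congr rfl (fun i (_ : i ∈ Finset.univ) => hT i),
    Fin.sum_univ_eq_sum_range Tn n, hm, Finset.sum_range_succ]
lemma lapK_apply {n : ℕ} (hn : 2 ≤ n) (i j : Fin n) :
    lapG (eK n) i j = if j = i then ((n:ℤ) - 1) else -1 := by
  unfold lapG eK
  by_cases h : j = i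
  · rw [if_pos h, if_pos h]
    simp only [Nat.cast_ite, Nat.cast_zero, Nat.cast_one]
    have : ∀ k : Fin n, (if i = k then (0:ℤ) else 1) = 1 - (if i = k then 1 else 0) := by
      intro k; split_ifs <;> simp
    rw [Finset.sum_congr rfl (fun k _ => this k), Finset.sum_sub_distrib, Finset.sum_ite_eq,
      Finset.sum_const]
    simp
  · rw [if_neg h, if_neg h, if_neg (fun hh => h (hh.symm))]
    simp

lemma lapK_sum_apply {n : ℕ} (hn : 2 ≤ n) (a : Fin n → ℤ) (j : Fin n) :
    (∑ i, a i • lapG (eK n) i) j = n * a j - ∑ i, a i := by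
  rw [Finset.sum_apply]
  simp only [Pi.smul_apply]
  have h1 : ∀ i : Fin n, a i • lapG (eK n) i j = (if j = i then a i * n else 0) - a i := by
    intro i
    rw [smul_eq_mul, lapK_apply hn]
    split_ifs <;> ring
  rw [Finset.sum_congr rfl (fun i _ => h1 i), Finset.sum_sub_distrib]
  have h2 : (∑ i : Fin n, if j = i then a i * n else 0) = a j * n := by
    rw [Finset.sum_ite_eq]; simp
  rw [h2]; ring

lemma effK_iff {n : ℕ} (hn : 2 ≤ n) (f : Fin n → ℤ) :
    effG (eK n) f ↔ ∃ c : ℤ, -c ≤ ∑ i, (f i - c) / n := by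
  have hn0 : (0:ℤ) < n := by positivity
  constructor
  · rintro ⟨g, ⟨a, hfg⟩, hg⟩
    refine ⟨-∑ i, a i, ?_⟩
    have key : ∀ j, (f j - (-∑ i, a i)) = g j + a j * n := by
      intro j
      have := congrFun hfg j
      rw [Pi.sub_apply, lapK_sum_apply hn] at this
      linarith
    calc -(-∑ i, a i) = ∑ i, a i := by ring
    _ ≤ ∑ j, (f j - (-∑ i, a i)) / n := by
        apply Finset.sum_le_sum
        intro j _
        rw [key j, Int.add_mul_ediv_right _ _ hn0.ne']
        have : 0 ≤ g j / (n:ℤ) := Int.ediv_nonneg (hg j) hn0.le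
        omega
  · rintro ⟨c, hc⟩
    set E : ℤ := (∑ i, (f i - c) / n) + c with hE
    have hE0 : 0 ≤ E := by omega
    have h0 : (0:ℕ) < n := by omega
    set z : Fin n := ⟨0, h0⟩ with hz
    set a : Fin n → ℤ := fun j => (f j - c) / n - (if j = z then E else 0) with ha
    set g : Fin n → ℤ := fun j => (f j - c) % n + (if j = z then n * E else 0) with hgdef
    have hS : ∑ i, a i = -c := by
      rw [ha]
      rw [Finset.sum_sub_distrib]
      have : (∑ j : Fin n, if j = z then E else 0) = E := by
        rw [Finset.sum_ite_eq']; simp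
      rw [this]; omega
    refine ⟨g, ⟨a, ?_⟩, ?_⟩
    · funext j
      have hde : (n:ℤ) * ((f j - c) / n) + (f j - c) % n = f j - c := Int.mul_ediv_add_emod _ _
      have haj : (n:ℤ) * a j = n * ((f j - c)/n) - (if j = z then n * E else 0) := by
        simp only [ha]; split_ifs <;> ring
      rw [Pi.sub_apply, lapK_sum_apply hn, hS, haj]
      simp only [hgdef]
      split_ifs with h <;> omega
    · intro j
      simp only [hgdef]
      have h1 : 0 ≤ (f j - c) % n := Int.emod_nonneg _ hn0.ne'
      have h2 : 0 ≤ (n:ℤ) * E := mul_nonneg hn0.le hE0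
      split_ifs with h <;> omega
lemma window_id (n m : ℕ) (hm : n = m + 1) (hm1 : 1 ≤ m) (q r c : ℤ) (hr0 : 0 ≤ r) (hr1 : r < m) :
    (∑ j ∈ Finset.range m, (((j:ℤ) - q - (if (j:ℤ) < r then 1 else 0)) - c)/(n:ℤ))
      + (q * ((n:ℤ)-1) + r - 1 - c)/(n:ℤ) = -1 - c := by
  have hn0 : (0:ℤ) < n := by omega
  set h : ℤ → ℤ := fun y => (y - q - c)/(n:ℤ) with hh
  set rn : ℕ := r.toNat with hrn
  have hrc : (rn:ℤ) = r := Int.toNat_of_nonneg hr0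
  have hrm : rn < m := by omega
  -- rewrite summand as ite of h
  have step1 : ∀ j ∈ Finset.range m,
      (((j:ℤ) - q - (if (j:ℤ) < r then 1 else 0)) - c)/(n:ℤ)
        = if j < rn then h ((j:ℤ)-1) else h (j:ℤ) := by
    intro j _
    by_cases hj : (j:ℤ) < r
    · rw [if_pos hj, if_pos (by omega)]
      simp only [hh]; congr 1; ring
    · rw [if_neg hj, if_neg (by omega)]
      simp only [hh]; congr 1; ring
  rw [Finset.sum_congr rfl step1]
  -- split the sum
  have split1 : ∑ j ∈ Finset.range m, (if j < rn then h ((j:ℤ)-1) else h (j:ℤ))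
      = (∑ j ∈ Finset.range rn, h ((j:ℤ)-1)) + ∑ j ∈ Finset.Ico rn m, h (j:ℤ) := by
    rw [Finset.range_eq_Ico, ← Finset.sum_Ico_consecutive _ (Nat.zero_le rn) hrm.le]
    congr 1
    · rw [← Finset.range_eq_Ico]
      apply Finset.sum_congr rfl
      intro j hj; rw [if_pos (Finset.mem_range.mp hj)]
    · apply Finset.sum_congr rfl
      intro j hj; rw [if_neg (by simpa using (Finset.mem_Ico.mp hj).1.not_gt)]
  -- full window sum
  have full : ∑ j ∈ Finset.range n, h ((j:ℤ)-1) = -1 - q - c := by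
    rw [← Finset.sum_range_reflect]
    have : ∀ j ∈ Finset.range n, h ((↑(n - 1 - j):ℤ)-1) = (((n:ℤ) - 2 - q - c) - (j:ℤ))/(n:ℤ) := by
      intro j hj
      simp only [Finset.mem_range] at hj
      simp only [hh]; congr 1
      have : ((n - 1 - j : ℕ) : ℤ) = (n:ℤ) - 1 - j := by omega
      rw [this]; ring
    rw [Finset.sum_congr rfl this, win n (by omega) ((n:ℤ) - 2 - q - c)]
    ring
  -- relate full sum to split pieces
  have split2 : ∑ j ∈ Finset.range n, h ((j:ℤ)-1)
      = ((∑ j ∈ Finset.range rn, h ((j:ℤ)-1)) + h (r-1)) + ∑ j ∈ Finset.Ico rn m, h (j:ℤ) := by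
    rw [Finset.range_eq_Ico, ← Finset.sum_Ico_consecutive _ (Nat.zero_le (rn+1)) (by omega : rn+1 ≤ n),
      ← Finset.range_eq_Ico]
    congr 1
    · rw [Finset.sum_range_succ]
      congr 2
      rw [hrc]  -- h (↑rn - 1) = h (r - 1)
    · rw [Finset.sum_Ico_eq_sum_range, Finset.sum_Ico_eq_sum_range]
      have hcard : n - (rn + 1) = m - rn := by omega
      rw [hcard]
      apply Finset.sum_congr rfl
      intro k _
      congr 1
      push_cast; ring
  -- sink term
  have sink : (q * ((n:ℤ)-1) + r - 1 - c)/(n:ℤ) = h (r-1) + q := by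
    have : q * ((n:ℤ)-1) + r - 1 - c = ((r - 1) - q - c) + q * (n:ℤ) := by ring
    rw [this, Int.add_mul_ediv_right _ _ hn0.ne']
  rw [split1, sink]
  have := full
  rw [split2] at this
  omega
lemma floor01 {n x c : ℤ} (hn : 0 < n) (hx0 : 0 ≤ x) (hxn : x < n) (hc0 : 0 ≤ c) (hcn : c < n) :
    ((c ≤ x ∧ (x - c)/n = 0) ∨ (x < c ∧ (x - c)/n = -1)) := by
  rcases le_or_gt c x with h|h
  · exact Or.inl ⟨h, ediv_eq_of hn (by rw [zero_mul]; omega) (by rw [zero_mul]; omega)⟩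
  · exact Or.inr ⟨h, ediv_eq_of hn (by rw [neg_one_mul]; omega) (by rw [neg_one_mul]; omega)⟩

theorem stmt15 (n : ℕ) (hn : 2 ≤ n) (f : Fin n → ℤ)
    (hsort : ∀ i j : Fin n, i ≤ j → (j : ℕ) < n - 1 → f i ≤ f j)
    (hpark : parkingK f)
    (q r : ℤ) (hr0 : 0 ≤ r) (hr1 : r < (n : ℤ) - 1)
    (hqr : f ⟨n - 1, by omega⟩ + 1 = q * ((n : ℤ) - 1) + r) :
    1 + rankG (eK n) f =
      ∑ i : Fin n, (if (i : ℕ) < n - 1 then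
        max 0 (q - (((i : ℕ) : ℤ) - f i) + (if ((i : ℕ) : ℤ) < r then 1 else 0))
        else 0) := by
  classical
  have hn0 : (0:ℤ) < n := by omega
  obtain ⟨m, hm⟩ : ∃ m, n = m + 1 := ⟨n - 1, by omega⟩
  have hm1 : 1 ≤ m := by omega
  set fn : ℕ → ℤ := fun j => f ⟨j % n, Nat.mod_lt j (by omega)⟩ with hfndef
  have hfn' : ∀ (j : ℕ) (hj : j < n), fn j = f ⟨j, hj⟩ := by
    intro j hj
    simp only [hfndef]
    congr 1
    exact Fin.ext (by simp [Nat.mod_eq_of_lt hj])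
  have hfn : ∀ i : Fin n, f i = fn i := by
    intro i
    rw [hfn' i i.2]
  have hsink : fn m = q * ((n:ℤ)-1) + r - 1 := by
    have h1 : fn m = f ⟨n-1, by omega⟩ := by
      rw [hfn' m (by omega)]
      congr 1
      exact Fin.ext (show m = n - 1 by omega)
    rw [h1]; linarith [hqr]
  have hf0 : ∀ j, j < m → 0 ≤ fn j := by
    intro j hj
    have hjn : j < n := by omega
    rw [hfn' j hjn]
    exact hpark.1 ⟨j, hjn⟩ (show j < n - 1 by omega)
  have hsortn : ∀ j k, j ≤ k → k < m → fn j ≤ fn k := by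
    intro j k hjk hk
    have hkn : k < n := by omega
    have hjn : j < n := by omega
    rw [hfn' j hjn, hfn' k hkn]
    exact hsort ⟨j,hjn⟩ ⟨k,hkn⟩ hjk (show k < n - 1 by omega)
  have hfle : ∀ j, j < m → fn j ≤ (j:ℤ) := by
    intro j hj
    have hjn : j < n := by omega
    have hne : (Finset.Ico (⟨j, hjn⟩ : Fin n) ⟨n-1, by omega⟩).Nonempty :=
      ⟨⟨j, hjn⟩, Finset.mem_Ico.mpr ⟨le_refl _, by rw [Fin.lt_def]; show j < n - 1; omega⟩⟩
    obtain ⟨k, hkY, hk⟩ := hpark.2 (Finset.Ico (⟨j, hjn⟩ : Fin n) ⟨n-1, by omega⟩) hne (by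
      intro x hx
      have h2 := (Finset.mem_Ico.mp hx).2
      rw [Fin.lt_def] at h2
      exact h2)
    obtain ⟨hik, hks⟩ := Finset.mem_Ico.mp hkY
    have hkm : (k:ℕ) < n - 1 := by rw [Fin.lt_def] at hks; exact hks
    have h1 : f ⟨j, hjn⟩ ≤ f k := hsort _ k hik hkm
    rw [Fin.card_Ico] at hk
    have h2 : fn j = f ⟨j, hjn⟩ := hfn' j hjn
    have h3 : (((⟨n-1, by omega⟩ : Fin n) : ℕ) - ((⟨j, hjn⟩ : Fin n) : ℕ) : ℕ) = n - 1 - j := rfl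
    rw [h3] at hk
    omega
  set lamF : Fin n → ℤ := fun i => if (i : ℕ) < n - 1 then
      max 0 (q - (((i : ℕ) : ℤ) - f i) + (if ((i : ℕ) : ℤ) < r then 1 else 0)) else 0
    with hlamdef
  set lamn : ℕ → ℤ := fun j => if j < n - 1 then
      max 0 (q - ((j:ℤ) - fn j) + (if (j:ℤ) < r then 1 else 0)) else 0 with hlamndef
  have hlam : ∀ i : Fin n, lamF i = lamn i := by
    intro i
    simp only [hlamdef, hlamndef]
    rw [hfn i]
  have hlamm : lamn m = 0 := by
    simp only [hlamndef]; rw [if_neg (by omega)]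
  have hlamnn : ∀ j, 0 ≤ lamn j := by
    intro j
    simp only [hlamndef]
    split_ifs <;> first | exact le_max_left _ _ | exact le_refl (0:ℤ)
  have hlamge : ∀ j, j < m → q - ((j:ℤ) - fn j) + (if (j:ℤ) < r then 1 else 0) ≤ lamn j := by
    intro j hj
    simp only [hlamndef]
    rw [if_pos (by omega : j < n - 1)]
    exact le_max_right _ _
  -- key degree identity
  have keyid : ∀ L : Fin n → ℤ,
      ∑ c ∈ Finset.range n, ((∑ i : Fin n, (f i - (c:ℤ))/(n:ℤ))
        - ∑ i : Fin n, ((f i - L i) - (c:ℤ))/(n:ℤ)) = ∑ i, L i := by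
    intro L
    have h1 : ∀ c ∈ Finset.range n,
        (∑ i : Fin n, (f i - (c:ℤ))/(n:ℤ)) - (∑ i : Fin n, ((f i - L i) - (c:ℤ))/(n:ℤ))
        = ∑ i : Fin n, ((f i - (c:ℤ))/(n:ℤ) - ((f i - L i) - (c:ℤ))/(n:ℤ)) := by
      intro c _
      rw [Finset.sum_sub_distrib]
    rw [Finset.sum_congr rfl h1, Finset.sum_comm]
    apply Finset.sum_congr rfl
    intro i _
    rw [Finset.sum_sub_distrib, win n (by omega) (f i), win n (by omega) (f i - L i)]
    ring
  -- non-effectiveness bound for f - lamF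
  have upper : ∀ (c : ℤ), (∑ i : Fin n, ((f i - lamF i) - c)/(n:ℤ)) ≤ -1 - c := by
    intro c
    rw [conv_sum hm (fun j => ((fn j - lamn j) - c)/(n:ℤ)) _ (fun i => by rw [hfn i, hlam i])]
    have hb : ∀ j ∈ Finset.range m, ((fn j - lamn j) - c)/(n:ℤ)
        ≤ (((j:ℤ) - q - (if (j:ℤ) < r then 1 else 0)) - c)/(n:ℤ) := by
      intro j hj
      apply Int.ediv_le_ediv hn0
      have := hlamge j (Finset.mem_range.mp hj)
      omega
    have hw := window_id n m hm hm1 q r c hr0 (by omega)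
    have hsk : (fn m - lamn m) - c = q * ((n:ℤ)-1) + r - 1 - c := by
      rw [hlamm, hsink]; ring
    calc (∑ j ∈ Finset.range m, ((fn j - lamn j) - c)/(n:ℤ)) + ((fn m - lamn m) - c)/(n:ℤ)
        ≤ (∑ j ∈ Finset.range m, (((j:ℤ) - q - (if (j:ℤ) < r then 1 else 0)) - c)/(n:ℤ))
          + ((fn m - lamn m) - c)/(n:ℤ) := add_le_add_left (Finset.sum_le_sum hb) _
      _ = -1 - c := by rw [hsk]; exact hw
  -- pointwise optimality claim
  have claim : ∀ c : ℕ, c < n →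
      (∑ i : Fin n, (f i - (c:ℤ))/(n:ℤ)) - (∑ i : Fin n, ((f i - lamF i) - (c:ℤ))/(n:ℤ))
        ≤ max 0 ((∑ i : Fin n, (f i - (c:ℤ))/(n:ℤ)) + (c:ℤ) + 1) := by
    intro c hc
    rw [conv_sum hm (fun j => (fn j - (c:ℤ))/(n:ℤ)) _ (fun i => by rw [hfn i]),
        conv_sum hm (fun j => ((fn j - lamn j) - (c:ℤ))/(n:ℤ)) _ (fun i => by rw [hfn i, hlam i])]
    have hw := window_id n m hm hm1 q r (c:ℤ) hr0 (by omega)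
    have e1 : fn m - (c:ℤ) = q * ((n:ℤ)-1) + r - 1 - (c:ℤ) := by rw [hsink]
    have e2 : (fn m - lamn m) - (c:ℤ) = q * ((n:ℤ)-1) + r - 1 - (c:ℤ) := by
      rw [hlamm, hsink]; ring
    rw [e1, e2]
    set SA : ℤ := ∑ j ∈ Finset.range m, (fn j - (c:ℤ))/(n:ℤ) with hSA
    set SB : ℤ := ∑ j ∈ Finset.range m, ((fn j - lamn j) - (c:ℤ))/(n:ℤ) with hSB
    set SW : ℤ := ∑ j ∈ Finset.range m,
      (((j:ℤ) - q - (if (j:ℤ) < r then 1 else 0)) - (c:ℤ))/(n:ℤ) with hSW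
    set sk : ℤ := (q * ((n:ℤ)-1) + r - 1 - (c:ℤ))/(n:ℤ) with hskdef
    -- hw : SW + sk = -1 - c ; goal : (SA + sk) - (SB + sk) ≤ max 0 (SA + sk + c + 1)
    have hBle : ∀ j ∈ Finset.range m,
        ((fn j - lamn j) - (c:ℤ))/(n:ℤ) ≤ (fn j - (c:ℤ))/(n:ℤ) := by
      intro j _
      exact Int.ediv_le_ediv hn0 (by have := hlamnn j; omega)
    have hWle : ∀ j ∈ Finset.range m, ((fn j - lamn j) - (c:ℤ))/(n:ℤ)
        ≤ (((j:ℤ) - q - (if (j:ℤ) < r then 1 else 0)) - (c:ℤ))/(n:ℤ) := by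
      intro j hj
      apply Int.ediv_le_ediv hn0
      have := hlamge j (Finset.mem_range.mp hj)
      omega
    have hBA : SB ≤ SA := Finset.sum_le_sum hBle
    have hBW : SB ≤ SW := Finset.sum_le_sum hWle
    rcases eq_or_lt_of_le hBW with hAz | hApos
    · have hg : (SA + sk) + (c:ℤ) + 1 = SA - SB := by omega
      have hg2 : (SA + sk) - (SB + sk) = SA - SB := by ring
      rw [hg, hg2]
      exact le_max_right _ _
    rcases eq_or_lt_of_le hBA with hBz | hBpos
    · have hg2 : (SA + sk) - (SB + sk) = 0 := by omega
      rw [hg2]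
      exact le_max_left _ _
    exfalso
    obtain ⟨i, hiR, hi⟩ : ∃ j ∈ Finset.range m,
        ((fn j - lamn j) - (c:ℤ))/(n:ℤ)
          < (((j:ℤ) - q - (if (j:ℤ) < r then 1 else 0)) - (c:ℤ))/(n:ℤ) := by
      by_contra hcon
      push_neg at hcon
      exact absurd (Finset.sum_le_sum hcon) (by omega)
    obtain ⟨j, hjR, hj⟩ : ∃ j ∈ Finset.range m,
        ((fn j - lamn j) - (c:ℤ))/(n:ℤ) < (fn j - (c:ℤ))/(n:ℤ) := by
      by_contra hcon
      push_neg at hcon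
      exact absurd (Finset.sum_le_sum hcon) (by omega)
    have hiM := Finset.mem_range.mp hiR
    have hjM := Finset.mem_range.mp hjR
    have hchoicei : lamn i = 0 ∨ lamn i = q - ((i:ℤ) - fn i) + (if (i:ℤ) < r then 1 else 0) := by
      simp only [hlamndef]
      rw [if_pos (by omega : i < n-1)]
      exact max_choice _ _
    have hdi : lamn i = 0 := by
      rcases hchoicei with h | h
      · exact h
      · exfalso
        have hx : fn i - lamn i = (i:ℤ) - q - (if (i:ℤ) < r then 1 else 0) := by omega
        rw [hx] at hi
        omega
    have hchoicej : lamn j = 0 ∨ lamn j = q - ((j:ℤ) - fn j) + (if (j:ℤ) < r then 1 else 0) := by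
      simp only [hlamndef]
      rw [if_pos (by omega : j < n-1)]
      exact max_choice _ _
    have hdj : lamn j = q - ((j:ℤ) - fn j) + (if (j:ℤ) < r then 1 else 0) := by
      rcases hchoicej with h | h
      · exfalso
        rw [h, sub_zero] at hj
        omega
      · exact h
    have hbi : fn i - lamn i = fn i := by rw [hdi]; ring
    have hbj : fn j - lamn j = (j:ℤ) - q - (if (j:ℤ) < r then 1 else 0) := by omega
    rw [hbi] at hi
    rw [hbj] at hj
    have key_i := lt_ediv_imp hn0 hi
    have key_j := ediv_lt_imp hn0 hj
    have hfiB := floor01 hn0 (hf0 i hiM) (by have := hfle i hiM; omega)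
      (by omega : (0:ℤ) ≤ (c:ℤ)) (by omega : (c:ℤ) < (n:ℤ))
    have hfjB := floor01 hn0 (hf0 j hjM) (by have := hfle j hjM; omega)
      (by omega : (0:ℤ) ≤ (c:ℤ)) (by omega : (c:ℤ) < (n:ℤ))
    have hsij : (i ≤ j ∧ fn i ≤ fn j) ∨ (j ≤ i ∧ fn j ≤ fn i) := by
      rcases le_total i j with h | h
      · exact Or.inl ⟨h, hsortn i j h hjM⟩
      · exact Or.inr ⟨h, hsortn j i h hiM⟩
    have hei : ((i:ℤ) < r ∧ (if (i:ℤ) < r then (1:ℤ) else 0) = 1)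
        ∨ (r ≤ (i:ℤ) ∧ (if (i:ℤ) < r then (1:ℤ) else 0) = 0) := by
      split_ifs with h
      · exact Or.inl ⟨h, rfl⟩
      · exact Or.inr ⟨by omega, rfl⟩
    have hej : ((j:ℤ) < r ∧ (if (j:ℤ) < r then (1:ℤ) else 0) = 1)
        ∨ (r ≤ (j:ℤ) ∧ (if (j:ℤ) < r then (1:ℤ) else 0) = 0) := by
      split_ifs with h
      · exact Or.inl ⟨h, rfl⟩
      · exact Or.inr ⟨by omega, rfl⟩
    rcases hfiB with ⟨hci, hvi⟩ | ⟨hci, hvi⟩ <;> rcases hfjB with ⟨hcj, hvj⟩ | ⟨hcj, hvj⟩ <;>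
      rw [hvi] at key_i <;> rw [hvj] at key_j <;> ring_nf at key_i key_j <;> omega
  -- assemble
  have hmem : (∑ i, lamF i) ∈ {d : ℤ | ∃ lam : Fin n → ℤ,
      (∀ i, 0 ≤ lam i) ∧ (∑ i, lam i) = d ∧ ¬ effG (eK n) (f - lam)} := by
    refine ⟨lamF, ?_, rfl, ?_⟩
    · intro i; rw [hlam i]; exact hlamnn i
    · rw [effK_iff hn]
      rintro ⟨c, hc⟩
      have hcc : ∑ i : Fin n, ((f i - lamF i) - c)/(n:ℤ)
          = ∑ i : Fin n, ((f - lamF) i - c)/(n:ℤ) := rfl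
      have := upper c
      rw [hcc] at this
      omega
  have hlb : ∀ d ∈ {d : ℤ | ∃ lam : Fin n → ℤ,
      (∀ i, 0 ≤ lam i) ∧ (∑ i, lam i) = d ∧ ¬ effG (eK n) (f - lam)}, (∑ i, lamF i) ≤ d := by
    rintro d ⟨L, hL0, hLs, hLne⟩
    rw [effK_iff hn] at hLne
    push_neg at hLne
    have hLb : ∀ c : ℤ, (∑ i : Fin n, ((f i - L i) - c)/(n:ℤ)) ≤ -1 - c := by
      intro c
      have h1 := hLne c
      have hcc : ∑ i : Fin n, ((f i - L i) - c)/(n:ℤ)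
          = ∑ i : Fin n, ((f - L) i - c)/(n:ℤ) := rfl
      rw [hcc]
      omega
    calc (∑ i, lamF i)
        = ∑ c ∈ Finset.range n, ((∑ i : Fin n, (f i - (c:ℤ))/(n:ℤ))
            - ∑ i : Fin n, ((f i - lamF i) - (c:ℤ))/(n:ℤ)) := (keyid lamF).symm
      _ ≤ ∑ c ∈ Finset.range n, max 0 ((∑ i : Fin n, (f i - (c:ℤ))/(n:ℤ)) + (c:ℤ) + 1) := by
          apply Finset.sum_le_sum
          intro c hcR
          exact claim c (Finset.mem_range.mp hcR)
      _ ≤ ∑ c ∈ Finset.range n, ((∑ i : Fin n, (f i - (c:ℤ))/(n:ℤ))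
            - ∑ i : Fin n, ((f i - L i) - (c:ℤ))/(n:ℤ)) := by
          apply Finset.sum_le_sum
          intro c hcR
          have h1 := hLb (c:ℤ)
          have h2 : (∑ i : Fin n, ((f i - L i) - (c:ℤ))/(n:ℤ))
              ≤ ∑ i : Fin n, (f i - (c:ℤ))/(n:ℤ) :=
            Finset.sum_le_sum (fun i _ => Int.ediv_le_ediv hn0 (by have := hL0 i; omega))
          exact max_le (by omega) (by omega)
      _ = ∑ i, L i := keyid L
      _ = d := hLs
  have hinf : sInf {d : ℤ | ∃ lam : Fin n → ℤ,
      (∀ i, 0 ≤ lam i) ∧ (∑ i, lam i) = d ∧ ¬ effG (eK n) (f - lam)} = ∑ i, lamF i :=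
    IsLeast.csInf_eq ⟨hmem, fun d hd => hlb d hd⟩
  show 1 + rankG (eK n) f = ∑ i, lamF i
  unfold rankG
  rw [hinf]
  ring
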